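/- arXiv:1005.1033 — 3 statements merged into one kernel-verified Lean document; each statement's English description precedes it below -/
import Mathlib

section
/- For any vectors A, B in a real inner product space, ⟨B − A, −A⟩ = ((1 + √2)/2)·‖−(√(2 + √2)/2)·A + (√(2 − √2)/2)·B‖² − ((−1 + √2)/2)·‖(√(2 − √2)/2)·A + (√(2 + √2)/2)·B‖². -/
theorem pinned_inner_eq_combination_of_sq_norms
    {E : Type*} [NormedAddCommGroup E] [InnerProductSpace ℝ E] (A B : E) :
    (inner ℝ (B - A) (-A) : ℝ) =
      ((1 + Real.sqrt 2) / 2) *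
        ‖-((Real.sqrt (2 + Real.sqrt 2) / 2) • A) + (Real.sqrt (2 - Real.sqrt 2) / 2) • B‖ ^ 2 -
      ((-1 + Real.sqrt 2) / 2) *
        ‖(Real.sqrt (2 - Real.sqrt 2) / 2) • A + (Real.sqrt (2 + Real.sqrt 2) / 2) • B‖ ^ 2 := by
  have h2 : (0:ℝ) ≤ 2 := by norm_num
  have hs2 : Real.sqrt 2 ^ 2 = 2 := Real.sq_sqrt h2
  have hs2le : Real.sqrt 2 ≤ 2 := by
    nlinarith [Real.sqrt_nonneg 2]
  have hp : Real.sqrt (2 + Real.sqrt 2) ^ 2 = 2 + Real.sqrt 2 :=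
    Real.sq_sqrt (by positivity)
  have hm : Real.sqrt (2 - Real.sqrt 2) ^ 2 = 2 - Real.sqrt 2 :=
    Real.sq_sqrt (by linarith)
  have hpm : Real.sqrt (2 + Real.sqrt 2) * Real.sqrt (2 - Real.sqrt 2) = Real.sqrt 2 := by
    rw [← Real.sqrt_mul (by positivity)]
    have : (2 + Real.sqrt 2) * (2 - Real.sqrt 2) = 2 := by nlinarith
    rw [this]
  have e1 := norm_add_sq_real (-((Real.sqrt (2 + Real.sqrt 2) / 2) • A))
    ((Real.sqrt (2 - Real.sqrt 2) / 2) • B)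
  have e2 := norm_add_sq_real ((Real.sqrt (2 - Real.sqrt 2) / 2) • A)
    ((Real.sqrt (2 + Real.sqrt 2) / 2) • B)
  simp only [norm_neg, norm_smul, inner_neg_left, real_inner_smul_left,
    real_inner_smul_right, Real.norm_eq_abs] at e1 e2
  rw [e1, e2]
  simp only [inner_sub_left, inner_neg_right, real_inner_self_eq_norm_sq]
  have hAB : (inner ℝ A B : ℝ) = inner ℝ B A := real_inner_comm B A
  rw [hAB]
  have habs1 : |Real.sqrt (2 + Real.sqrt 2) / 2| = Real.sqrt (2 + Real.sqrt 2) / 2 := by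
    rw [abs_of_nonneg]; positivity
  have habs2 : |Real.sqrt (2 - Real.sqrt 2) / 2| = Real.sqrt (2 - Real.sqrt 2) / 2 := by
    rw [abs_of_nonneg]; positivity
  rw [habs1, habs2]
  linear_combination
    (-((1 + Real.sqrt 2) * ‖A‖ ^ 2 / 8 - (-1 + Real.sqrt 2) * ‖B‖ ^ 2 / 8)) * hp +
    (-((1 + Real.sqrt 2) * ‖B‖ ^ 2 / 8 - (-1 + Real.sqrt 2) * ‖A‖ ^ 2 / 8)) * hm +
    (Real.sqrt 2 * (inner ℝ B A : ℝ) / 2) * hpm +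
    (-(‖A‖ ^ 2 / 4 - ‖B‖ ^ 2 / 4 - (inner ℝ B A : ℝ) / 2)) * hs2
end

section
/- For all real numbers u and v, (1/(2π)) · ∫₀^{2π} (√3 − (1 + iu)·cos θ − (1 + iv)·sin θ)⁻¹ dθ = ((u − i)² + (v − i)² + 3)^(−1/2), where the complex power is taken with the principal branch. -/
open Complex Real

lemma circle_outside_zero (w : ℂ) (hw : 1 < ‖w‖) :
    (∮ z in C((0:ℂ),1), (z - w)⁻¹) = 0 := by
  apply circleIntegral_eq_zero_of_differentiable_on_off_countable zero_le_one
    Set.countable_empty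
  · refine ContinuousOn.inv₀ (by fun_prop) fun z hz => sub_ne_zero.2 fun h => ?_
    rw [Metric.mem_closedBall, dist_zero_right] at hz
    rw [h] at hz
    exact absurd hz (not_le.2 hw)
  · rintro z ⟨hz, -⟩
    refine (differentiableAt_id.sub_const _).inv (sub_ne_zero.2 fun h => ?_)
    rw [Metric.mem_ball, dist_zero_right] at hz
    rw [h] at hz
    exact absurd hz (not_lt.2 hw.le)

lemma circle_two_poles (K w₁ w₂ : ℂ) (h1 : ‖w₁‖ < 1) (h2 : 1 < ‖w₂‖) :
    (∮ z in C((0:ℂ),1), K * ((z - w₁)⁻¹ - (z - w₂)⁻¹)) = K * (2 * Real.pi * I) := by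
  rw [circleIntegral.integral_const_mul]
  have i1 : CircleIntegrable (fun z => (z - w₁)⁻¹) 0 1 :=
    circleIntegrable_sub_inv_iff.2 (Or.inr (by simp [h1.ne]))
  have i2 : CircleIntegrable (fun z => (z - w₂)⁻¹) 0 1 :=
    circleIntegrable_sub_inv_iff.2 (Or.inr (by simp [h2.ne']))
  rw [circleIntegral.integral_sub i1 i2,
    circleIntegral.integral_sub_inv_of_mem_ball (by simpa using h1),
    circle_outside_zero w₂ h2, sub_zero]

lemma circle_one_pole (K w : ℂ) (h1 : ‖w‖ < 1) :
    (∮ z in C((0:ℂ),1), K * (z - w)⁻¹) = K * (2 * Real.pi * I) := by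
  rw [circleIntegral.integral_const_mul,
    circleIntegral.integral_sub_inv_of_mem_ball (by simpa using h1)]

lemma denom_ne_zero (u v θ : ℝ) :
    ((Real.sqrt 3 : ℂ) - (1 + Complex.I * u) * (Real.cos θ : ℂ) -
      (1 + Complex.I * v) * (Real.sin θ : ℂ)) ≠ 0 := by
  intro h
  have hre := congrArg Complex.re h
  simp [Complex.sub_re, Complex.add_re, Complex.mul_re, Complex.add_im, Complex.mul_im,
    Complex.cos_ofReal_re, Complex.sin_ofReal_re] at hre
  have h1 : Real.sin θ ^ 2 + Real.cos θ ^ 2 = 1 := Real.sin_sq_add_cos_sq θ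
  have h3 : Real.sqrt 3 ^ 2 = 3 := Real.sq_sqrt (by norm_num)
  have h4 : (0:ℝ) ≤ Real.sqrt 3 := Real.sqrt_nonneg 3
  nlinarith [sq_nonneg (Real.cos θ - Real.sin θ), sq_nonneg (Real.cos θ + Real.sin θ - Real.sqrt 3)]

lemma sqrt_half_facts (S : ℂ) (hre : 0 < S.re) :
    (S ^ ((1:ℂ)/2)) * (S ^ ((1:ℂ)/2)) = S ∧ 0 < (S ^ ((1:ℂ)/2)).re := by
  have hS0 : S ≠ 0 := fun h => by simp [h] at hre
  constructor
  · rw [← Complex.cpow_add _ _ hS0]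
    norm_num
  · rw [Complex.cpow_def_of_ne_zero hS0, Complex.exp_re]
    have harg : |S.arg| < π/2 := Complex.abs_arg_lt_pi_div_two_iff.2 (Or.inl hre)
    have harg' := abs_lt.1 harg
    have : (Complex.log S * (1/2)).im = S.arg / 2 := by
      simp [Complex.mul_im, Complex.log_im, Complex.log_re]
      ring
    rw [this]
    have : 0 < Real.cos (S.arg / 2) :=
      Real.cos_pos_of_mem_Ioo ⟨by linarith [harg'.1], by linarith [harg'.2, Real.pi_pos]⟩
    positivity

lemma root_ineq (u v σ τ x : ℝ) (hσ : 0 < σ) (hx2 : x^2 = 3) (hx : 1 ≤ x)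
    (h1 : σ^2 - τ^2 = u^2 + v^2 + 1) (h2 : σ*τ = -(u+v)) :
    (1+v)^2 + (u-1)^2 < (x+σ)^2 + τ^2 := by
  have h2sq : σ^2*τ^2 = (u+v)^2 := by linear_combination (σ*τ - (u+v)) * h2
  have hT : 0 < 1 + x*σ + τ^2 := by nlinarith [sq_nonneg τ]
  have hD2 : (v-u)^2 < (1 + x*σ + τ^2)^2 := by
    nlinarith [sq_nonneg τ, sq_nonneg (τ^2), sq_nonneg σ, sq_nonneg (σ*τ),
      mul_nonneg (mul_nonneg (by linarith : (0:ℝ) ≤ x) hσ.le) (sq_nonneg τ),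
      mul_pos hσ (lt_of_lt_of_le one_pos hx)]
  have key : v - u < 1 + x*σ + τ^2 := by nlinarith [hD2, hT]
  nlinarith [key, h1, hx2]

set_option maxHeartbeats 2000000 in
theorem pinned_contour_integral_eval (u v : ℝ) :
    (1 / (2 * (Real.pi : ℂ))) *
      ∫ θ in (0:ℝ)..(2 * Real.pi),
        ((Real.sqrt 3 : ℂ) - (1 + Complex.I * u) * (Real.cos θ : ℂ) -
          (1 + Complex.I * v) * (Real.sin θ : ℂ))⁻¹ =
    (((u : ℂ) - Complex.I) ^ 2 + ((v : ℂ) - Complex.I) ^ 2 + 3) ^ (-(1 / 2) : ℂ) := by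
  have hSre : 0 < (((u:ℂ) - I)^2 + ((v:ℂ) - I)^2 + 3).re := by
    have h : (((u:ℂ) - I)^2 + ((v:ℂ) - I)^2 + 3).re = u^2 + v^2 + 1 := by
      simp [pow_two, Complex.add_re, Complex.sub_re, Complex.mul_re, Complex.sub_im,
        Complex.mul_im]
      ring
    rw [h]; positivity
  obtain ⟨hs2, hsre⟩ := sqrt_half_facts _ hSre
  set s : ℂ := ((((u:ℂ) - I)^2 + ((v:ℂ) - I)^2 + 3) ^ ((1:ℂ)/2)) with hsdef
  have hs0 : s ≠ 0 := fun h => by rw [h] at hsre; simp at hsre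
  have hrw : (((u:ℂ) - I)^2 + ((v:ℂ) - I)^2 + 3) ^ (-(1/2) : ℂ) = s⁻¹ := by
    rw [show (-(1/2) : ℂ) = -((1:ℂ)/2) by norm_num, Complex.cpow_neg]
  rw [hrw]
  have hc2 : ((Real.sqrt 3 : ℂ))^2 = 3 := by
    norm_cast
    exact Real.sq_sqrt (by norm_num)
  have hc1 : (1:ℝ) ≤ Real.sqrt 3 := by
    rw [show (1:ℝ) = Real.sqrt 1 by simp]
    exact Real.sqrt_le_sqrt (by norm_num)
  have hc0 : ((Real.sqrt 3 : ℂ)) ≠ 0 :=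
    Complex.ofReal_ne_zero.2 (by positivity)
  have h1 : s.re^2 - s.im^2 = u^2+v^2+1 := by
    have h := congrArg Complex.re hs2
    simp [Complex.mul_re, Complex.add_re, Complex.sub_re, pow_two, Complex.mul_im,
      Complex.sub_im] at h
    linarith
  have h2 : s.re * s.im = -(u+v) := by
    have h := congrArg Complex.im hs2
    simp [Complex.mul_re, Complex.add_re, Complex.sub_re, pow_two, Complex.mul_im,
      Complex.sub_im] at h
    linarith
  set c : ℂ := (Real.sqrt 3 : ℂ) with hcdef
  have hc2' : (Real.sqrt 3)^2 = (3:ℝ) := Real.sq_sqrt (by norm_num)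
  clear_value s c
  by_cases hA : (1 + I*(u:ℂ)) - I*(1 + I*(v:ℂ)) = 0
  · have hv : v = -1 := by
      have h := congrArg Complex.re hA
      simp at h
      linarith
    have hu : u = 1 := by
      have h := congrArg Complex.im hA
      simp at h
      linarith
    have hs3 : s * s = 3 := by
      rw [hs2, hu, hv]; push_cast; linear_combination (2:ℂ) * Complex.I_sq
    have hsc : s = c := by
      have hfac : (s - c)*(s + c) = 0 := by linear_combination hs3 - hc2
      rcases mul_eq_zero.1 hfac with h | h
      · exact sub_eq_zero.1 h
      · exfalso
        have h' := congrArg Complex.re h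
        rw [hcdef] at h'
        simp [Complex.add_re] at h'
        linarith [hsre, hc1]
    have hcpos : 0 < ‖c‖ := by
      rw [hcdef]
      exact norm_pos_iff.mpr (Complex.ofReal_ne_zero.2 (by positivity))
    have habsw : ‖(1+I)/c‖ < 1 := by
      rw [norm_div, div_lt_one hcpos]
      have h2 : ‖(1+I)‖ = Real.sqrt 2 := by
        rw [Complex.norm_def, Complex.normSq_apply]
        norm_num
      have h3 : ‖c‖ = Real.sqrt 3 := by
        rw [hcdef, Complex.norm_real, Real.norm_eq_abs, _root_.abs_of_nonneg (Real.sqrt_nonneg 3)]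
      rw [h2, h3]
      exact Real.sqrt_lt_sqrt (by norm_num) (by norm_num)
    have key : (∫ θ in (0:ℝ)..(2*Real.pi),
          (c - (1 + Complex.I * (u:ℂ)) * (Real.cos θ : ℂ) -
            (1 + Complex.I * (v:ℂ)) * (Real.sin θ : ℂ))⁻¹)
        = ∮ z in C((0:ℂ),1), (-I/c) * (z - (1+I)/c)⁻¹ := by
      rw [circleIntegral]
      refine intervalIntegral.integral_congr fun θ hθ => ?_
      simp only [deriv_circleMap, circleMap, Complex.ofReal_one, one_mul, zero_add,
        smul_eq_mul]
      set e : ℂ := Complex.exp ((θ:ℂ) * I) with hedef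
      clear_value e
      set Dv : ℂ := c - (1 + Complex.I * (u:ℂ)) * (Real.cos θ : ℂ) -
          (1 + Complex.I * (v:ℂ)) * (Real.sin θ : ℂ) with hDdef
      have he : e ≠ 0 := by rw [hedef]; exact Complex.exp_ne_zero _
      have hD : Dv ≠ 0 := by rw [hDdef, hcdef]; exact denom_ne_zero u v θ
      have hcos : (Real.cos θ : ℂ) = (e + e⁻¹)/2 := by
        rw [hedef, Complex.ofReal_cos,
          show Complex.cos (θ:ℂ) = (Complex.exp ((θ:ℂ)*I) + Complex.exp (-(θ:ℂ)*I))/2 from rfl,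
          neg_mul, Complex.exp_neg]
      have hsin : (Real.sin θ : ℂ) = (e⁻¹ - e) * I / 2 := by
        rw [hedef, Complex.ofReal_sin,
          show Complex.sin (θ:ℂ) = (Complex.exp (-(θ:ℂ)*I) - Complex.exp ((θ:ℂ)*I)) * I / 2
            from rfl,
          neg_mul, Complex.exp_neg]
      clear_value Dv
      have hnew : e - (1+I)/c ≠ 0 := sub_ne_zero.2 fun h => by
        rw [← h] at habsw
        rw [hedef, Complex.norm_exp_ofReal_mul_I] at habsw
        exact absurd habsw (lt_irrefl _)
      have hQ2 : 2*c*(e - (1+I)/c) = 2*e*Dv := by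
        rw [hDdef, hcos, hsin, hu, hv]
        push_cast
        field_simp [hc0]
        linear_combination (e^2 - 1) * Complex.I_sq
      have hprodeq : e - (1+I)/c = (2*e*Dv)/(2*c) := by
        rw [eq_div_iff (by simp [hc0] : (2:ℂ)*c ≠ 0)]
        linear_combination hQ2
      rw [hprodeq]
      field_simp [hD, hc0, he]
      linear_combination (1:ℂ) * Complex.I_sq
    rw [key, circle_one_pole _ _ habsw, hsc]
    have hπ : ((Real.pi : ℝ) : ℂ) ≠ 0 := Complex.ofReal_ne_zero.2 Real.pi_ne_zero
    field_simp
    linear_combination (-1:ℂ) * Complex.I_sq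
  · set A : ℂ := (1 + I*(u:ℂ)) - I*(1 + I*(v:ℂ)) with hAdef
    set B : ℂ := (1 + I*(u:ℂ)) + I*(1 + I*(v:ℂ)) with hBdef
    clear_value A B
    have hAB : (c - s)*(c + s) = A * B := by
      rw [hAdef, hBdef]
      linear_combination hc2 - hs2 + (-(1+(u:ℂ)^2) + 2*I*(v:ℂ) + (v:ℂ)^2*(I^2-1)) * Complex.I_sq
    have hApos : 0 < ‖A‖ := norm_pos_iff.mpr hA
    have hAlt : ‖A‖ < ‖(c + s)‖ := by
      apply lt_of_pow_lt_pow_left₀ 2 (norm_nonneg _)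
      rw [Complex.sq_norm, Complex.sq_norm, Complex.normSq_apply, Complex.normSq_apply,
        hAdef, hcdef]
      simp only [Complex.add_re, Complex.add_im, Complex.sub_re, Complex.sub_im,
        Complex.mul_re, Complex.mul_im, Complex.one_re, Complex.one_im, Complex.I_re,
        Complex.I_im, Complex.ofReal_re, Complex.ofReal_im]
      have := root_ineq u v s.re s.im (Real.sqrt 3) hsre hc2' hc1 h1 h2
      nlinarith [this]
    have hBlt : ‖B‖ < ‖(c + s)‖ := by
      apply lt_of_pow_lt_pow_left₀ 2 (norm_nonneg _)
      rw [Complex.sq_norm, Complex.sq_norm, Complex.normSq_apply, Complex.normSq_apply,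
        hBdef, hcdef]
      simp only [Complex.add_re, Complex.add_im, Complex.sub_re, Complex.sub_im,
        Complex.mul_re, Complex.mul_im, Complex.one_re, Complex.one_im, Complex.I_re,
        Complex.I_im, Complex.ofReal_re, Complex.ofReal_im]
      have := root_ineq (-u) (-v) s.re (-s.im) (Real.sqrt 3) hsre hc2' hc1
        (by ring_nf; ring_nf at h1; linarith) (by linarith [h2])
      nlinarith [this]
    set z₁ : ℂ := (c - s)/A with hz1def
    set z₂ : ℂ := (c + s)/A with hz2def
    clear_value z₁ z₂
    have habs2 : 1 < ‖z₂‖ := by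
      rw [hz2def, norm_div, lt_div_iff₀ hApos, one_mul]
      exact hAlt
    have habs1 : ‖z₁‖ < 1 := by
      rw [hz1def, norm_div, div_lt_one hApos]
      have hprod : ‖(c-s)‖ * ‖(c+s)‖ = ‖A‖ * ‖B‖ := by
        rw [← norm_mul, ← norm_mul, hAB]
      nlinarith [hBlt, hApos, norm_nonneg (c-s), norm_nonneg (c+s),
        mul_pos hApos (sub_pos.2 hBlt)]
    have key : (∫ θ in (0:ℝ)..(2*Real.pi),
          (c - (1 + Complex.I * (u:ℂ)) * (Real.cos θ : ℂ) -
            (1 + Complex.I * (v:ℂ)) * (Real.sin θ : ℂ))⁻¹)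
        = ∮ z in C((0:ℂ),1), (-I/s) * ((z - z₁)⁻¹ - (z - z₂)⁻¹) := by
      rw [circleIntegral]
      refine intervalIntegral.integral_congr fun θ hθ => ?_
      simp only [deriv_circleMap, circleMap, Complex.ofReal_one, one_mul, zero_add,
        smul_eq_mul]
      set e : ℂ := Complex.exp ((θ:ℂ) * I) with hedef
      clear_value e
      set Dv : ℂ := c - (1 + Complex.I * (u:ℂ)) * (Real.cos θ : ℂ) -
          (1 + Complex.I * (v:ℂ)) * (Real.sin θ : ℂ) with hDdef
      have he : e ≠ 0 := by rw [hedef]; exact Complex.exp_ne_zero _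
      have hD : Dv ≠ 0 := by rw [hDdef, hcdef]; exact denom_ne_zero u v θ
      have hcos : (Real.cos θ : ℂ) = (e + e⁻¹)/2 := by
        rw [hedef, Complex.ofReal_cos,
          show Complex.cos (θ:ℂ) = (Complex.exp ((θ:ℂ)*I) + Complex.exp (-(θ:ℂ)*I))/2 from rfl,
          neg_mul, Complex.exp_neg]
      have hsin : (Real.sin θ : ℂ) = (e⁻¹ - e) * I / 2 := by
        rw [hedef, Complex.ofReal_sin,
          show Complex.sin (θ:ℂ) = (Complex.exp (-(θ:ℂ)*I) - Complex.exp ((θ:ℂ)*I)) * I / 2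
            from rfl,
          neg_mul, Complex.exp_neg]
      clear_value Dv
      have hne1 : e - z₁ ≠ 0 := sub_ne_zero.2 fun h => by
        rw [← h] at habs1
        rw [hedef, Complex.norm_exp_ofReal_mul_I] at habs1
        exact absurd habs1 (lt_irrefl _)
      have hne2 : e - z₂ ≠ 0 := sub_ne_zero.2 fun h => by
        rw [← h] at habs2
        rw [hedef, Complex.norm_exp_ofReal_mul_I] at habs2
        exact absurd habs2 (lt_irrefl _)
      have hQ2 : A*e^2 - 2*c*e + B = -(2*e*Dv) := by
        rw [hDdef, hcos, hsin, hAdef, hBdef]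
        field_simp
        ring
      have e1 : A*(e - z₁) = A*e - (c - s) := by rw [hz1def]; field_simp
      have e2 : A*(e - z₂) = A*e - (c + s) := by rw [hz2def]; field_simp
      have expand : A*(A*((e-z₁)*(e-z₂))) = A*(A*e^2 - 2*c*e + B) := by
        calc A*(A*((e-z₁)*(e-z₂))) = (A*(e-z₁))*(A*(e-z₂)) := by ring
        _ = (A*e - (c-s))*(A*e-(c+s)) := by rw [e1, e2]
        _ = A*(A*e^2 - 2*c*e + B) := by linear_combination hAB
      have expand' := mul_left_cancel₀ hA expand
      have hprodeq : (e-z₁)*(e-z₂) = -(2*e*Dv)/A := by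
        rw [eq_div_iff hA]; linear_combination expand'.trans hQ2
      have split : (e-z₁)⁻¹ - (e-z₂)⁻¹ = (z₁ - z₂)/((e-z₁)*(e-z₂)) := by
        field_simp
        ring
      have hz12 : z₁ - z₂ = -(2*s)/A := by rw [hz1def, hz2def]; ring
      rw [split, hz12, hprodeq]
      field_simp [hD, hs0, hA, he]
      linear_combination Complex.I_sq
    rw [key, circle_two_poles _ _ _ habs1 habs2]
    have hπ : ((Real.pi : ℝ) : ℂ) ≠ 0 := Complex.ofReal_ne_zero.2 Real.pi_ne_zero
    field_simp
    linear_combination (-1:ℂ) * Complex.I_sq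
end

section
/- For all real numbers u and v, (1/(2π)) · ∫_{ℝ²} exp((1 + iu)·x + (1 + iv)·y − √3·√(x² + y²)) / √(x² + y²) dx dy = ((u − i)² + (v − i)² + 3)^(−1/2), where the complex power is taken with the principal branch. -/
open MeasureTheory Complex Set Real Filter

noncomputable section
namespace PF

def X (u v : ℝ) : ℂ := ((u:ℂ) - I)^2 + ((v:ℂ) - I)^2 + 3
def w (u v : ℝ) : ℂ := X u v ^ ((1:ℂ)/2)

lemma X_re (u v : ℝ) : (X u v).re = u^2 + v^2 + 1 := by
  simp [X, pow_two, Complex.add_re, Complex.mul_re, Complex.sub_re, Complex.sub_im]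
  ring

lemma X_im (u v : ℝ) : (X u v).im = -(2*u + 2*v) := by
  simp [X, pow_two, Complex.add_im, Complex.mul_im, Complex.sub_re, Complex.sub_im]
  ring

lemma X_ne (u v : ℝ) : X u v ≠ 0 := by
  intro h
  have := X_re u v
  rw [h] at this
  simp at this
  nlinarith [sq_nonneg u, sq_nonneg v]

lemma w_sq (u v : ℝ) : (w u v)^2 = X u v := by
  rw [w, sq, ← Complex.cpow_add _ _ (X_ne u v)]
  norm_num

lemma w_re_pos (u v : ℝ) : 0 < (w u v).re := by
  have hX := X_ne u v
  have harg : |(X u v).arg| < π/2 := by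
    rw [Complex.abs_arg_lt_pi_div_two_iff]
    left
    rw [X_re]; positivity
  rw [w, Complex.cpow_def_of_ne_zero hX, Complex.exp_re]
  have him : ((Complex.log (X u v)) * ((1:ℂ)/2)).im = (X u v).arg / 2 := by
    simp [Complex.mul_im, Complex.log_im, Complex.log_re]
    ring
  rw [him]
  have : Real.cos ((X u v).arg / 2) > 0 := by
    apply Real.cos_pos_of_mem_Ioo
    constructor <;> [linarith [abs_lt.mp harg]; linarith [abs_lt.mp harg]]
  positivity

lemma w_ne (u v : ℝ) : w u v ≠ 0 := by
  intro h
  have := w_re_pos u v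
  rw [h] at this
  simp at this

lemma w_pq (u v : ℝ) : (w u v).re^2 - (w u v).im^2 = u^2+v^2+1 ∧
    2 * ((w u v).re * (w u v).im) = -(2*u+2*v) := by
  have h := w_sq u v
  constructor
  · have := congrArg Complex.re h
    rw [X_re] at this
    simpa [sq, Complex.mul_re] using this
  · have := congrArg Complex.im h
    rw [X_im] at this
    simp [sq, Complex.mul_im] at this
    linarith

lemma key_core (u v p q s : ℝ) (hp : 0 < p) (h1 : p^2 - q^2 = u^2+v^2+1)
    (hs : s^2 = 3) (hs0 : 0 < s) : u - v < s * p := by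
  nlinarith [mul_pos hs0 hp, sq_nonneg (u - v - s*p), sq_nonneg (u+v), sq_nonneg q]

lemma cw_re_pos (u v : ℝ) : 0 < ((Real.sqrt 3:ℂ) + w u v).re := by
  have h := w_re_pos u v
  have h3 : 0 < Real.sqrt 3 := Real.sqrt_pos.mpr (by norm_num)
  simp [Complex.add_re]
  positivity

lemma cw_ne (u v : ℝ) : (Real.sqrt 3:ℂ) + w u v ≠ 0 := by
  intro h
  have := cw_re_pos u v
  rw [h] at this
  simp at this

lemma abs_plus_lt (u v : ℝ) :
    ‖(1 + I*(u:ℂ)) + I*(1 + I*(v:ℂ))‖ < ‖(Real.sqrt 3:ℂ) + w u v‖ := by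
  have h := w_re_pos u v
  have h1 := (w_pq u v).1
  set p := (w u v).re
  set q := (w u v).im
  have hs : Real.sqrt 3 ^ 2 = 3 := Real.sq_sqrt (by norm_num)
  have hs0 : 0 < Real.sqrt 3 := Real.sqrt_pos.mpr (by norm_num)
  rw [Complex.norm_def, Complex.norm_def]
  apply Real.sqrt_lt_sqrt (normSq_nonneg _)
  rw [Complex.normSq_apply, Complex.normSq_apply]
  simp [Complex.add_re, Complex.add_im, Complex.mul_re, Complex.mul_im]
  have key := key_core u v p q _ h h1 hs hs0
  nlinarith [sq_nonneg q]

lemma abs_minus_lt (u v : ℝ) :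
    ‖(1 + I*(u:ℂ)) - I*(1 + I*(v:ℂ))‖ < ‖(Real.sqrt 3:ℂ) + w u v‖ := by
  have h := w_re_pos u v
  have h1 := (w_pq u v).1
  set p := (w u v).re
  set q := (w u v).im
  have hs : Real.sqrt 3 ^ 2 = 3 := Real.sq_sqrt (by norm_num)
  have hs0 : 0 < Real.sqrt 3 := Real.sqrt_pos.mpr (by norm_num)
  rw [Complex.norm_def, Complex.norm_def]
  apply Real.sqrt_lt_sqrt (normSq_nonneg _)
  rw [Complex.normSq_apply, Complex.normSq_apply]
  simp [Complex.add_re, Complex.add_im, Complex.sub_re, Complex.sub_im, Complex.mul_re, Complex.mul_im]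
  have key := key_core v u p q _ h (by linarith) hs hs0
  nlinarith [sq_nonneg q]

lemma cos_add_sin_lt (θ : ℝ) : Real.cos θ + Real.sin θ < Real.sqrt 3 := by
  have hs : Real.sqrt 3 ^ 2 = 3 := Real.sq_sqrt (by norm_num)
  have hs0 : 0 < Real.sqrt 3 := Real.sqrt_pos.mpr (by norm_num)
  nlinarith [Real.sin_sq_add_cos_sq θ, sq_nonneg (Real.cos θ - Real.sin θ),
    sq_nonneg (Real.cos θ + Real.sin θ - Real.sqrt 3)]

lemma cos_add_sin_le (θ : ℝ) : Real.cos θ + Real.sin θ ≤ Real.sqrt 2 := by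
  have hs : Real.sqrt 2 ^ 2 = 2 := Real.sq_sqrt (by norm_num)
  have hs0 : 0 < Real.sqrt 2 := Real.sqrt_pos.mpr (by norm_num)
  nlinarith [Real.sin_sq_add_cos_sq θ, sq_nonneg (Real.cos θ - Real.sin θ),
    sq_nonneg (Real.cos θ + Real.sin θ - Real.sqrt 2)]


lemma X_def (u v : ℝ) : X u v = ((u:ℂ) - I)^2 + ((v:ℂ) - I)^2 + 3 := rfl

lemma angular (u v : ℝ) :
    ∫ θ in Ioo (-π) π,
      ((Real.sqrt 3:ℂ) - (1 + I*(u:ℂ)) * (Real.cos θ:ℂ) - (1 + I*(v:ℂ)) * (Real.sin θ:ℂ))⁻¹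
      = 2 * (π:ℂ) / w u v := by
  set α : ℂ := 1 + I*(u:ℂ) with hα
  set β : ℂ := 1 + I*(v:ℂ) with hβ
  set c : ℂ := ((Real.sqrt 3 : ℝ):ℂ) with hc
  set W : ℂ := w u v with hW
  have hc2 : c^2 = 3 := by
    rw [hc, ← Complex.ofReal_pow, Real.sq_sqrt (by norm_num : (0:ℝ) ≤ 3)]
    norm_num
  have hw2 : W^2 = 3 - α^2 - β^2 := by
    rw [hW, w_sq, X_def, hα, hβ]
    linear_combination (u^2+v^2+2:ℂ) * Complex.I_sq
  have hcw : c + W ≠ 0 := cw_ne u v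
  have hWne : W ≠ 0 := w_ne u v
  set A : ℂ := -(α - I*β)/2 with hA
  set z₁ : ℂ := (α + I*β) / (c + W) with hz₁
  have hz₁cw : z₁ * (c + W) = α + I*β := div_mul_cancel₀ _ hcw
  have hAz₁ : A * z₁ = (W - c)/2 := by
    apply mul_right_cancel₀ hcw
    rw [hA]
    linear_combination (-(α - I*β)/2) * hz₁cw - (1/2) * hw2 + (1/2) * hc2
      + ((β:ℂ)^2/2) * Complex.I_sq
  have hcAz : c + A*z₁ = (c + W)/2 := by rw [hAz₁]; ring
  have hroot : c*z₁ + A*z₁^2 = (α + I*β)/2 := by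
    linear_combination z₁ * hAz₁ + (1/2) * hz₁cw
  have habs1 : ‖z₁‖ < 1 := by
    rw [hz₁, norm_div, div_lt_one (norm_pos_iff.mpr hcw)]
    exact abs_plus_lt u v
  have habsA : ‖A‖ < ‖c + W‖ / 2 := by
    have h1 : ‖A‖ = ‖α - I*β‖ / 2 := by
      rw [hA, neg_div, norm_neg, norm_div, Complex.norm_two]
    rw [h1]
    exact (div_lt_div_iff_of_pos_right two_pos).mpr (abs_minus_lt u v)
  have hLne : ∀ z ∈ Metric.closedBall (0:ℂ) 1, A*z + (c + A*z₁) ≠ 0 := by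
    intro z hz h0
    have hzabs : ‖z‖ ≤ 1 := by
      simpa [Complex.dist_eq] using Metric.mem_closedBall.mp hz
    have h1 : c + A*z₁ = -(A*z) := by linear_combination h0
    have h2 : ‖c + A*z₁‖ ≤ ‖A‖ := by
      rw [h1, norm_neg, norm_mul]
      nlinarith [norm_nonneg A, norm_nonneg z]
    rw [hcAz, norm_div, Complex.norm_two] at h2
    linarith
  set f : ℂ → ℂ := fun z => (I * (A*z + (c + A*z₁)))⁻¹ with hf
  have hdiff : DiffContOnCl ℂ f (Metric.ball 0 1) := by
    apply DifferentiableOn.diffContOnCl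
    rw [closure_ball (0:ℂ) one_ne_zero]
    apply DifferentiableOn.inv
    · fun_prop
    · intro z hz
      exact mul_ne_zero Complex.I_ne_zero (hLne z hz)
  have hz₁mem : z₁ ∈ Metric.ball (0:ℂ) 1 := by
    simpa [Complex.dist_eq] using habs1
  have hC := hdiff.circleIntegral_sub_inv_smul hz₁mem
  have hfz₁ : f z₁ = (I * W)⁻¹ := by
    have h3 : A*z₁ + (c + A*z₁) = W := by rw [hAz₁]; ring
    show (I * (A*z₁ + (c + A*z₁)))⁻¹ = (I * W)⁻¹
    rw [h3]
  have hpt : ∀ θ : ℝ, deriv (circleMap 0 1) θ • ((circleMap 0 1 θ - z₁)⁻¹ • f (circleMap 0 1 θ))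
      = (c - α*(Real.cos θ:ℂ) - β*(Real.sin θ:ℂ))⁻¹ := by
    intro θ
    rw [deriv_circleMap]
    set z : ℂ := circleMap 0 1 θ with hzdef
    have hzabs : ‖z‖ = 1 := by
      rw [hzdef, norm_circleMap_zero]; norm_num
    have hze : z = (Real.cos θ : ℂ) + (Real.sin θ:ℂ)*I := by
      rw [hzdef, circleMap]
      push_cast
      rw [Complex.exp_mul_I]
      simp
    have hz0 : z ≠ 0 := by
      intro h; rw [h] at hzabs; simp at hzabs
    have hzz₁ : z - z₁ ≠ 0 := by
      rw [sub_ne_zero]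
      intro h; rw [← h] at habs1; rw [hzabs] at habs1; exact lt_irrefl _ habs1
    have hLz : A*z + (c + A*z₁) ≠ 0 := by
      apply hLne
      simp [Complex.dist_eq, hzabs]
    have htrig : (Real.cos θ:ℂ)^2 + (Real.sin θ:ℂ)^2 = 1 := by
      exact_mod_cast congrArg Complex.ofReal (Real.cos_sq_add_sin_sq θ)
    have hdenne : (c - α*(Real.cos θ:ℂ) - β*(Real.sin θ:ℂ)) ≠ 0 := by
      intro h
      have := congrArg Complex.re h
      simp only [hc, hα, hβ, Complex.sub_re, Complex.mul_re, Complex.add_re, Complex.add_im,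
        Complex.mul_im, Complex.ofReal_re, Complex.ofReal_im, Complex.I_re, Complex.I_im,
        Complex.one_re, Complex.one_im, Complex.zero_re] at this
      norm_num at this
      nlinarith [cos_add_sin_lt θ]
    have hDz : (c - α*(Real.cos θ:ℂ) - β*(Real.sin θ:ℂ)) * z = (z - z₁)*(A*z + (c + A*z₁)) := by
      rw [hze, hA]
      linear_combination hroot + (-((Real.cos θ:ℂ) + (Real.sin θ:ℂ)*I)^2) * hA
        + ((α - I*β)*(Real.sin θ:ℂ)^2/2 - β*(Real.cos θ:ℂ)*(Real.sin θ:ℂ)) * Complex.I_sq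
        + (-α/2 - I/2 - I^2*(v:ℂ)/2) * htrig
    rw [smul_eq_mul, smul_eq_mul]
    show z * I * ((z - z₁)⁻¹ * (I * (A*z + (c + A*z₁)))⁻¹) = _
    have key : (z - z₁)⁻¹ * (I * (A*z + (c + A*z₁)))⁻¹
        = (I * ((c - α*(Real.cos θ:ℂ) - β*(Real.sin θ:ℂ)) * z))⁻¹ := by
      rw [← mul_inv]
      rw [show (z - z₁) * (I * (A*z + (c + A*z₁))) = I * ((z - z₁) * (A*z + (c + A*z₁))) from by ring]
      rw [← hDz]
    rw [key, mul_inv, mul_inv]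
    have expand : z * I * (I⁻¹ * ((c - α*(Real.cos θ:ℂ) - β*(Real.sin θ:ℂ))⁻¹ * z⁻¹))
        = (z * z⁻¹) * (I * I⁻¹) * (c - α*(Real.cos θ:ℂ) - β*(Real.sin θ:ℂ))⁻¹ := by ring
    rw [expand, mul_inv_cancel₀ hz0, mul_inv_cancel₀ Complex.I_ne_zero]
    ring
  -- now assemble
  set g : ℝ → ℂ := fun θ => (c - α*(Real.cos θ:ℂ) - β*(Real.sin θ:ℂ))⁻¹ with hg
  have hC2 : ∫ θ in (0:ℝ)..2*π, g θ = (2*(π:ℂ)*I) • f z₁ := by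
    rw [← hC]
    unfold circleIntegral
    exact intervalIntegral.integral_congr (fun θ _ => (hpt θ).symm)
  have hper : Function.Periodic g (2*π) := by
    intro θ
    simp only [hg, Real.cos_add_two_pi, Real.sin_add_two_pi]
  have hshift : ∫ θ in (-π)..π, g θ = ∫ θ in (0:ℝ)..2*π, g θ := by
    have h := hper.intervalIntegral_add_eq (-π) 0
    rw [show -π + 2*π = π from by ring, zero_add] at h
    exact h
  have hIoo : ∫ θ in Ioo (-π) π, g θ = ∫ θ in (-π)..π, g θ := by
    rw [intervalIntegral.integral_of_le (by linarith [Real.pi_pos]),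
      integral_Ioc_eq_integral_Ioo]
  rw [show (∫ θ in Ioo (-π) π,
      ((Real.sqrt 3:ℂ) - (1 + I*(u:ℂ)) * (Real.cos θ:ℂ) - (1 + I*(v:ℂ)) * (Real.sin θ:ℂ))⁻¹)
      = ∫ θ in Ioo (-π) π, g θ from rfl]
  rw [hIoo, hshift, hC2, hfz₁, smul_eq_mul]
  field_simp

lemma radial (m : ℂ) (hm : m.re < 0) :
    ∫ r in Ioi (0:ℝ), Complex.exp (r * m) = (-m)⁻¹ := by
  have hm0 : m ≠ 0 := by intro h; rw [h] at hm; simp at hm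
  have hderiv : ∀ x ∈ Ioi (0:ℝ), HasDerivAt (fun r : ℝ => Complex.exp (r * m) / m)
      (Complex.exp (x * m)) x := by
    intro x _
    have h1 : HasDerivAt (fun z : ℂ => Complex.exp (z * m)) (Complex.exp ((x:ℂ) * m) * m) (x:ℂ) := by
      simpa [mul_comm] using ((hasDerivAt_id (x:ℂ)).mul_const m).cexp
    have h2 := (h1.comp_ofReal).div_const m
    simpa [mul_div_cancel_right₀ _ hm0] using h2
  have hcont : ContinuousWithinAt (fun r : ℝ => Complex.exp (r * m) / m) (Ici 0) 0 := by
    apply Continuous.continuousWithinAt; fun_prop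
  have hint : IntegrableOn (fun x : ℝ => Complex.exp (x * m)) (Ioi (0:ℝ)) := by
    apply Integrable.mono' (exp_neg_integrableOn_Ioi 0 (show 0 < -m.re by linarith))
    · apply Continuous.aestronglyMeasurable; fun_prop
    · filter_upwards [ae_restrict_mem measurableSet_Ioi] with x _
      rw [Complex.norm_exp]
      apply le_of_eq
      congr 1
      simp [Complex.mul_re]
      ring
  have htend : Tendsto (fun r : ℝ => Complex.exp (r * m) / m) atTop (nhds 0) := by
    apply squeeze_zero_norm (a := fun r : ℝ => Real.exp (r * m.re) / ‖m‖)
    · intro r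
      rw [norm_div, Complex.norm_exp]
      apply le_of_eq
      congr 2
      simp [Complex.mul_re]
    · rw [show (0:ℝ) = 0 / ‖m‖ from by simp]
      apply Tendsto.div_const
      apply Real.tendsto_exp_atBot.comp
      exact tendsto_id.atTop_mul_const_of_neg hm
  have := integral_Ioi_of_hasDerivAt_of_tendsto hcont hderiv hint htend
  rw [this]
  simp [inv_neg]

theorem main (u v : ℝ) :
    (1 / (2 * (Real.pi : ℂ))) *
      ∫ p : ℝ × ℝ,
        Complex.exp ((1 + Complex.I * u) * (p.1 : ℂ) + (1 + Complex.I * v) * (p.2 : ℂ) -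
            (Real.sqrt 3 : ℂ) * (Real.sqrt (p.1 ^ 2 + p.2 ^ 2) : ℂ)) /
          (Real.sqrt (p.1 ^ 2 + p.2 ^ 2) : ℂ) =
    (((u : ℂ) - Complex.I) ^ 2 + ((v : ℂ) - Complex.I) ^ 2 + 3) ^ (-(1 / 2) : ℂ) := by
  have h2lt3 : Real.sqrt 2 < Real.sqrt 3 := Real.sqrt_lt_sqrt (by norm_num) (by norm_num)
  set G : ℝ × ℝ → ℂ := fun p =>
    Complex.exp ((1 + Complex.I * u) * (p.1 : ℂ) + (1 + Complex.I * v) * (p.2 : ℂ) -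
      (Real.sqrt 3 : ℂ) * (Real.sqrt (p.1 ^ 2 + p.2 ^ 2) : ℂ)) /
      (Real.sqrt (p.1 ^ 2 + p.2 ^ 2) : ℂ) with hG
  rw [← integral_comp_polarCoord_symm G]
  set m : ℝ → ℂ := fun θ => (1 + Complex.I * u) * (Real.cos θ:ℂ)
      + (1 + Complex.I * v) * (Real.sin θ:ℂ) - (Real.sqrt 3 : ℂ) with hm
  have hmre : ∀ θ, (m θ).re = Real.cos θ + Real.sin θ - Real.sqrt 3 := by
    intro θ
    simp [hm, Complex.add_re, Complex.sub_re, Complex.mul_re, Complex.cos_ofReal_re, Complex.sin_ofReal_re]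
  have hmneg : ∀ θ, (m θ).re < 0 := fun θ => by rw [hmre]; linarith [cos_add_sin_lt θ]
  have hstep1 : ∀ p ∈ polarCoord.target,
      p.1 • G (polarCoord.symm p) = Complex.exp (p.1 * m p.2) := by
    rintro ⟨r, θ⟩ hp
    have hr : (0:ℝ) < r := hp.1
    have hrne : (r:ℂ) ≠ 0 := by exact_mod_cast hr.ne'
    have hsq : Real.sqrt ((r * Real.cos θ)^2 + (r * Real.sin θ)^2) = r := by
      rw [show (r * Real.cos θ)^2 + (r * Real.sin θ)^2 = r^2 from by
        nlinarith [Real.sin_sq_add_cos_sq θ]]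
      exact Real.sqrt_sq hr.le
    show r • G (r * Real.cos θ, r * Real.sin θ) = Complex.exp ((r:ℂ) * m θ)
    rw [hG]
    simp only [hsq]
    rw [Complex.real_smul, ← mul_div_assoc, mul_div_cancel_left₀ _ hrne]
    congr 1
    rw [hm]
    push_cast
    ring
  rw [setIntegral_congr_fun (polarCoord.open_target.measurableSet) hstep1]
  rw [show polarCoord.target = Ioi (0:ℝ) ×ˢ Ioo (-π) π from rfl]
  rw [Measure.volume_eq_prod, ← Measure.prod_restrict]
  have hcont : Continuous (fun p : ℝ × ℝ => Complex.exp (p.1 * m p.2)) := by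
    apply Complex.continuous_exp.comp
    rw [hm]
    fun_prop
  have hint : Integrable (fun p : ℝ × ℝ => Complex.exp (p.1 * m p.2))
      ((volume.restrict (Ioi (0:ℝ))).prod (volume.restrict (Ioo (-π) π))) := by
    have h1 : Integrable (fun r : ℝ => Real.exp (-(Real.sqrt 3 - Real.sqrt 2) * r))
        (volume.restrict (Ioi (0:ℝ))) := exp_neg_integrableOn_Ioi 0 (by linarith)
    have h2 : Integrable (fun _ : ℝ => (1:ℝ)) (volume.restrict (Ioo (-π) π)) :=
      integrableOn_const (by simp [Real.volume_Ioo])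
    have hgint : Integrable (fun p : ℝ × ℝ =>
          Real.exp (-(Real.sqrt 3 - Real.sqrt 2) * p.1))
        ((volume.restrict (Ioi (0:ℝ))).prod (volume.restrict (Ioo (-π) π))) := by
      simpa only [mul_one] using h1.mul_prod h2
    apply Integrable.mono' hgint
    · exact hcont.aestronglyMeasurable
    · rw [Measure.prod_restrict]
      filter_upwards [ae_restrict_mem (measurableSet_Ioi.prod measurableSet_Ioo)] with p hp
      rw [Complex.norm_exp]
      have hre : ((p.1:ℂ) * m p.2).re = p.1 * (m p.2).re := by
        simp [Complex.mul_re]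
      rw [hre]
      apply Real.exp_le_exp.mpr
      rw [hmre]
      have h1 : Real.cos p.2 + Real.sin p.2 - Real.sqrt 3 ≤ -(Real.sqrt 3 - Real.sqrt 2) := by
        linarith [cos_add_sin_le p.2]
      calc p.1 * (Real.cos p.2 + Real.sin p.2 - Real.sqrt 3)
          ≤ p.1 * (-(Real.sqrt 3 - Real.sqrt 2)) :=
            mul_le_mul_of_nonneg_left h1 (le_of_lt hp.1)
        _ = -(Real.sqrt 3 - Real.sqrt 2) * p.1 := by ring
  rw [MeasureTheory.integral_prod _ hint]
  rw [MeasureTheory.integral_integral_swap hint]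
  have hrad : (∫ θ in Ioo (-π) π, ∫ r in Ioi (0:ℝ), Complex.exp (r * m θ))
      = ∫ θ in Ioo (-π) π, (-(m θ))⁻¹ :=
    integral_congr_ae (ae_of_all _ fun θ => radial (m θ) (hmneg θ))
  rw [hrad]
  have hang : (∫ θ in Ioo (-π) π, (-(m θ))⁻¹) = 2 * (π:ℂ) / w u v := by
    rw [← angular u v]
    apply integral_congr_ae (ae_of_all _ ?_)
    intro θ
    congr 1
    rw [hm]
    ring
  rw [hang]
  rw [show (((u : ℂ) - Complex.I) ^ 2 + ((v : ℂ) - Complex.I) ^ 2 + 3) ^ (-(1 / 2) : ℂ)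
      = (w u v)⁻¹ from by rw [show (-(1/2) : ℂ) = -((1:ℂ)/2) from by norm_num, Complex.cpow_neg]; rfl]
  have hπ : (π:ℂ) ≠ 0 := Complex.ofReal_ne_zero.mpr Real.pi_ne_zero
  field_simp

end PF
end

open MeasureTheory Complex

theorem pinned_fourier_transform_F (u v : ℝ) :
    (1 / (2 * (Real.pi : ℂ))) *
      ∫ p : ℝ × ℝ,
        Complex.exp ((1 + Complex.I * u) * (p.1 : ℂ) + (1 + Complex.I * v) * (p.2 : ℂ) -
            (Real.sqrt 3 : ℂ) * (Real.sqrt (p.1 ^ 2 + p.2 ^ 2) : ℂ)) /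
          (Real.sqrt (p.1 ^ 2 + p.2 ^ 2) : ℂ) =
    (((u : ℂ) - Complex.I) ^ 2 + ((v : ℂ) - Complex.I) ^ 2 + 3) ^ (-(1 / 2) : ℂ) :=
  PF.main u v
end
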